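/- Let P and Q be finite p-groups of the same order p^n, with exp(P) = p^m and Ω_{m-1}(P) ≠ P. If exp(P) > exp(Q), then ψ(P) > ψ(Q). -/

import Mathlib

/-- Sum of the orders of the elements of a group. -/
noncomputable def psi (G : Type*) [Group G] : ℕ := ∑ᶠ x : G, orderOf x

/-- `Omega p G i` is the subgroup generated by all `x` with `x ^ p ^ i = 1`. -/
def Omega (p : ℕ) (G : Type*) [Group G] (i : ℕ) : Subgroup G :=
  Subgroup.closure {x : G | x ^ p ^ i = 1}

/-- The class `CP₂`: `o(xy) ≤ max (o x) (o y)` for all `x y`. -/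
def CP2 (G : Type*) [Group G] : Prop :=
  ∀ x y : G, orderOf (x * y) ≤ max (orderOf x) (orderOf y)

theorem stmt_1 {p n m : ℕ} (hp : p.Prime) (P Q : Type*) [Group P] [Finite P]
    [Group Q] [Finite Q] (hPp : IsPGroup p P) (hQp : IsPGroup p Q)
    (hcardP : Nat.card P = p ^ n) (hcardQ : Nat.card Q = p ^ n)
    (hexpP : Monoid.exponent P = p ^ m) (hM : Omega p P (m - 1) ≠ ⊤)
    (hlt : Monoid.exponent Q < Monoid.exponent P) :
    psi Q < psi P := by
  classical
  cases nonempty_fintype P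
  cases nonempty_fintype Q
  have hp2 : 2 ≤ p := hp.two_le
  have hp1 : 1 < p := hp.one_lt
  -- m ≥ 1
  have hexpQpos : 0 < Monoid.exponent Q :=
    Nat.pos_of_ne_zero Monoid.exponent_ne_zero_of_finite
  have hm1 : 1 ≤ m := by
    by_contra h
    have : m = 0 := by omega
    rw [this, pow_zero] at hexpP
    omega
  -- exponent Q ≤ p^(m-1)
  have hQdvd : Monoid.exponent Q ∣ p ^ n := hcardQ ▸ Group.exponent_dvd_nat_card
  obtain ⟨k, hk, hkeq⟩ := (Nat.dvd_prime_pow hp).mp hQdvd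
  have hkm : k < m := by
    rw [hkeq, hexpP] at hlt
    exact (pow_lt_pow_iff_right₀ hp1).mp hlt
  have hQle : Monoid.exponent Q ≤ p ^ (m - 1) := by
    rw [hkeq]
    exact Nat.pow_le_pow_right (by omega) (by omega)
  -- n ≥ 1 and m ≤ n
  have hPdvd : p ^ m ∣ p ^ n := by
    rw [← hexpP, ← hcardP]; exact Group.exponent_dvd_nat_card
  have hmn : m ≤ n := (Nat.pow_dvd_pow_iff_le_right hp1).mp hPdvd
  set H := Omega p P (m - 1) with hH
  -- card H ≤ p^(n-1)
  have hHdvd : Nat.card H ∣ p ^ n := hcardP ▸ Subgroup.card_subgroup_dvd_card H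
  obtain ⟨j, hj, hjeq⟩ := (Nat.dvd_prime_pow hp).mp hHdvd
  have hjn : j < n := by
    rcases lt_or_eq_of_le hj with h | h
    · exact h
    · exfalso
      apply hM
      apply Subgroup.eq_top_of_card_eq
      rw [hjeq, h, hcardP]
  have hHle : Nat.card H ≤ p ^ (n - 1) := by
    rw [hjeq]; exact Nat.pow_le_pow_right (by omega) (by omega)
  have hHpos : 0 < Nat.card H := Nat.card_pos
  -- every element outside H has order p^m
  have horder : ∀ x : P, x ∉ H → orderOf x = p ^ m := by
    intro x hx
    have hdvd : orderOf x ∣ p ^ m := hexpP ▸ Monoid.order_dvd_exponent x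
    obtain ⟨i, hi, hieq⟩ := (Nat.dvd_prime_pow hp).mp hdvd
    rcases lt_or_eq_of_le hi with h | h
    · exfalso
      apply hx
      apply Subgroup.subset_closure
      show x ^ p ^ (m - 1) = 1
      apply orderOf_dvd_iff_pow_eq_one.mp
      rw [hieq]
      exact pow_dvd_pow p (by omega)
    · rw [hieq, h]
  -- psi Q ≤ p^n * p^(m-1)
  have hpsiQ : psi Q ≤ p ^ n * p ^ (m - 1) := by
    rw [psi, finsum_eq_sum_of_fintype]
    calc ∑ x : Q, orderOf x ≤ ∑ _x : Q, p ^ (m - 1) :=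
          Finset.sum_le_sum fun x _ => (Nat.le_of_dvd hexpQpos (Monoid.order_dvd_exponent x)).trans hQle
      _ = p ^ n * p ^ (m - 1) := by
          rw [Finset.sum_const, smul_eq_mul, Finset.card_univ, ← Nat.card_eq_fintype_card, hcardQ]
  -- psi P lower bound
  set N := p ^ n with hN
  set h := Nat.card H with hh
  have hcardfil : (Finset.univ.filter (· ∈ H)).card = h := by
    rw [hh, Nat.card_eq_fintype_card, Fintype.card_subtype]
  have hcardfil' : (Finset.univ.filter (· ∉ H)).card = N - h := by
    have := Finset.card_filter_add_card_filter_not (s := (Finset.univ : Finset P))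
      (p := (· ∈ H))
    rw [hcardfil, Finset.card_univ, ← Nat.card_eq_fintype_card, hcardP] at this
    omega
  have hhN : h ≤ N := by
    rw [hh, ← hcardP]; exact Nat.card_le_card_of_injective _ H.subtype_injective
  have hpsiP : h + (N - h) * p ^ m ≤ psi P := by
    rw [psi, finsum_eq_sum_of_fintype,
      ← Finset.sum_filter_add_sum_filter_not Finset.univ (· ∈ H) orderOf]
    gcongr
    · calc h = (Finset.univ.filter (· ∈ H)).card * 1 := by rw [hcardfil, mul_one]
        _ ≤ _ := by rw [← smul_eq_mul]; exact Finset.card_nsmul_le_sum _ _ _ fun x _ => orderOf_pos x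
    · have heq : ∑ x ∈ Finset.univ.filter (· ∉ H), orderOf x = (N - h) * p ^ m := by
        rw [Finset.sum_congr rfl (fun x hx => horder x (Finset.mem_filter.mp hx).2),
          Finset.sum_const, hcardfil', smul_eq_mul]
      omega
  -- arithmetic
  have hNb : N = p * p ^ (n - 1) := by
    rw [hN, ← pow_succ']
    congr 1
    omega
  have h2b : 2 * p ^ (n - 1) ≤ N := hNb ▸ Nat.mul_le_mul_right _ hp2
  have hc : p ^ (n - 1) ≤ N - h := by omega
  have hkey : N ≤ (N - h) * p := by
    have : (N - h) * 2 ≤ (N - h) * p := Nat.mul_le_mul_left _ hp2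
    omega
  have hfin : N * p ^ (m - 1) < h + (N - h) * p ^ m := by
    have hpm : p ^ m = p * p ^ (m - 1) := by
      rw [← pow_succ']; congr 1; omega
    calc N * p ^ (m - 1) ≤ ((N - h) * p) * p ^ (m - 1) := Nat.mul_le_mul_right _ hkey
      _ = (N - h) * p ^ m := by rw [hpm]; ring
      _ < h + (N - h) * p ^ m := by omega
  calc psi Q ≤ N * p ^ (m - 1) := hpsiQ
    _ < h + (N - h) * p ^ m := hfin
    _ ≤ psi P := hpsiP
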